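/- arXiv:1304.1748 — 6 statements merged into one kernel-verified Lean document; each statement's English description precedes it below -/
import Mathlib

section
/- For every ω ∈ (-1,1) and every x ∈ ℝ, U_ω(x)² · exp( 2i ∫₀ˣ |U_ω(x')|² dx' ) = |U_ω(x)|², i.e. this product equals the real number (1−ω²)/(ω + cosh(2√(1−ω²) x)). -/
open Complex

/-- The MTM soliton profile `U_ω`. -/
noncomputable def solitonU (ω : ℝ) (x : ℝ) : ℂ :=
  (Real.sqrt (1 - ω ^ 2) : ℂ) /
    ((Real.sqrt (1 + ω) * Real.cosh (Real.sqrt (1 - ω ^ 2) * x) : ℝ) +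
      Complex.I * (Real.sqrt (1 - ω) * Real.sinh (Real.sqrt (1 - ω ^ 2) * x) : ℝ))

lemma key (kk aa t : ℝ) (ha : aa ≠ 0) :
    ((kk:ℂ)/((aa:ℂ) + Complex.I*((aa:ℝ)*t : ℝ)))^2 *
      Complex.exp (2*Complex.I*((Real.arctan t : ℝ) : ℂ)) =
    (((kk^2/(aa^2+(aa*t)^2)) : ℝ) : ℂ) := by
  have hs0 : (0:ℝ) < Real.sqrt (1 + t^2) := Real.sqrt_pos.2 (by positivity)
  have hs : Real.sqrt (1+t^2) ^ 2 = 1 + t^2 := Real.sq_sqrt (by positivity)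
  set s : ℝ := Real.sqrt (1+t^2) with hsdef
  have h2 : (2:ℂ)*Complex.I*((Real.arctan t : ℝ):ℂ)
      = ((Real.arctan t :ℝ):ℂ)*I + ((Real.arctan t:ℝ):ℂ)*I := by ring
  rw [h2, Complex.exp_add, Complex.exp_mul_I, ← Complex.ofReal_cos, ← Complex.ofReal_sin,
    Real.cos_arctan, Real.sin_arctan, ← hsdef]
  have haC : (aa:ℂ) ≠ 0 := by exact_mod_cast ha
  have hsC0 : (s:ℂ) ≠ 0 := by exact_mod_cast hs0.ne'
  have hsC : ((s:ℂ))^2 = 1 + (t:ℂ)^2 := by norm_cast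
  have hT : (1:ℂ) + (t:ℂ)*I ≠ 0 := by
    intro h
    have := congrArg Complex.re h
    simp at this
  push_cast
  have e1 : ((aa:ℂ) + I * ((aa:ℂ) * (t:ℂ))) = (aa:ℂ) * (1 + (t:ℂ)*I) := by ring
  have e3 : ((aa:ℂ))^2 + ((aa:ℂ)*(t:ℂ))^2 = (aa:ℂ)^2 * (s:ℂ)^2 := by
    linear_combination (-(aa:ℂ)^2) * hsC
  rw [e1, e3]
  have hT2 : ((1:ℂ)+(t:ℂ)*I)^2 ≠ 0 := pow_ne_zero _ hT
  field_simp

theorem stmt4 (ω : ℝ) (hω₁ : -1 < ω) (hω₂ : ω < 1) (x : ℝ) :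
    (solitonU ω x) ^ 2 *
        Complex.exp (2 * Complex.I *
          ((∫ x' in (0 : ℝ)..x, ‖solitonU ω x'‖ ^ 2 : ℝ) : ℂ))
      = (((1 - ω ^ 2) / (ω + Real.cosh (2 * Real.sqrt (1 - ω ^ 2) * x)) : ℝ) : ℂ) := by
  have h1 : (0:ℝ) < 1 - ω^2 := by nlinarith
  have hk : (0:ℝ) < Real.sqrt (1-ω^2) := Real.sqrt_pos.2 h1
  set k := Real.sqrt (1-ω^2) with hkdef
  have hk2 : k^2 = 1 - ω^2 := Real.sq_sqrt h1.le
  have hp : (0:ℝ) < 1 + ω := by linarith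
  have hm : (0:ℝ) < 1 - ω := by linarith
  have hps : (0:ℝ) < Real.sqrt (1+ω) := Real.sqrt_pos.2 hp
  have hms : (0:ℝ) < Real.sqrt (1-ω) := Real.sqrt_pos.2 hm
  have hp2 : Real.sqrt (1+ω)^2 = 1+ω := Real.sq_sqrt hp.le
  have hm2 : Real.sqrt (1-ω)^2 = 1-ω := Real.sq_sqrt hm.le
  have hpm : Real.sqrt (1+ω) * Real.sqrt (1-ω) = k := by
    rw [hkdef, ← Real.sqrt_mul hp.le]; ring_nf
  set a : ℝ → ℝ := fun y => Real.sqrt (1+ω) * Real.cosh (k*y) with hadef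
  set b : ℝ → ℝ := fun y => Real.sqrt (1-ω) * Real.sinh (k*y) with hbdef
  have hapos : ∀ y, 0 < a y := fun y => mul_pos hps (Real.cosh_pos _)
  have habpos : ∀ y, 0 < a y ^ 2 + b y ^ 2 := fun y => by positivity
  have hU : ∀ y, solitonU ω y = (k:ℂ)/((a y : ℝ) + Complex.I*((b y : ℝ))) := by
    intro y; rfl
  have habs : ∀ y, ‖solitonU ω y‖^2 = k^2/(a y^2 + b y^2) := by
    intro y
    rw [hU y, ← Complex.normSq_eq_norm_sq, Complex.normSq_div]
    rw [mul_comm Complex.I]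
    rw [Complex.normSq_add_mul_I, Complex.normSq_ofReal]
    ring_nf
  have hder : ∀ y : ℝ, HasDerivAt (fun z => Real.arctan (b z / a z)) (k^2/(a y^2 + b y^2)) y := by
    intro y
    have hky : HasDerivAt (fun z : ℝ => k*z) k y := by
      simpa using (hasDerivAt_id y).const_mul k
    have hc : HasDerivAt (fun z => Real.cosh (k*z)) (Real.sinh (k*y) * k) y :=
      (Real.hasDerivAt_cosh (k*y)).comp y hky
    have hsh : HasDerivAt (fun z => Real.sinh (k*z)) (Real.cosh (k*y) * k) y :=
      (Real.hasDerivAt_sinh (k*y)).comp y hky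
    have ha' : HasDerivAt a (Real.sqrt (1+ω) * (Real.sinh (k*y) * k)) y := hc.const_mul _
    have hb' : HasDerivAt b (Real.sqrt (1-ω) * (Real.cosh (k*y) * k)) y := hsh.const_mul _
    have ht : HasDerivAt (fun z => b z / a z)
        ((Real.sqrt (1-ω) * (Real.cosh (k*y) * k) * a y -
          b y * (Real.sqrt (1+ω) * (Real.sinh (k*y) * k))) / (a y)^2) y :=
      hb'.div ha' (hapos y).ne'
    have hcomp := (Real.hasDerivAt_arctan (b y / a y)).comp y ht
    refine hcomp.congr_deriv ?_; symm
    have hcs : Real.cosh (k*y)^2 - Real.sinh (k*y)^2 = 1 := Real.cosh_sq_sub_sinh_sq (k*y)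
    have hnum : Real.sqrt (1-ω) * (Real.cosh (k*y) * k) * a y -
        b y * (Real.sqrt (1+ω) * (Real.sinh (k*y) * k)) = k^2 := by
      simp only [hadef, hbdef]
      linear_combination k*(Real.cosh (k*y)^2 - Real.sinh (k*y)^2)*hpm + k^2*hcs
    rw [hnum]
    have han := (hapos y).ne'
    have habn := (habpos y).ne'
    have hay2 : a y ^2 + b y ^2 = (a y)^2 * (1 + (b y / a y)^2) := by
      field_simp
    rw [hay2]
    field_simp
  have hb0 : b 0 = 0 := by simp [hbdef]
  have hca : Continuous a := by
    rw [hadef]; fun_prop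
  have hcb : Continuous b := by
    rw [hbdef]; fun_prop
  have hint : (∫ x' in (0:ℝ)..x, ‖solitonU ω x'‖^2) = Real.arctan (b x / a x) := by
    have hcont : Continuous (fun y => k^2/(a y^2 + b y^2)) :=
      continuous_const.div (((hca.pow 2).add (hcb.pow 2))) (fun y => (habpos y).ne')
    have hcong : (∫ x' in (0:ℝ)..x, ‖solitonU ω x'‖^2)
        = ∫ x' in (0:ℝ)..x, k^2/(a x'^2 + b x'^2) := by
      apply intervalIntegral.integral_congr
      intro y _
      exact habs y
    rw [hcong, intervalIntegral.integral_eq_sub_of_hasDerivAt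
      (fun y _ => hder y) (hcont.intervalIntegrable 0 x)]
    simp [hb0]
  rw [hint, hU x]
  have hax := (hapos x).ne'
  have hbx : a x * (b x / a x) = b x := by field_simp
  have hkey := key k (a x) (b x / a x) hax
  rw [hbx] at hkey
  rw [hkey]
  norm_cast
  rw [hk2]
  congr 1
  have hcs : Real.cosh (k*x)^2 - Real.sinh (k*x)^2 = 1 := Real.cosh_sq_sub_sinh_sq (k*x)
  have h2m : (2:ℝ) * k * x = 2 * (k*x) := by ring
  rw [h2m, Real.cosh_two_mul]
  simp only [hadef, hbdef]
  linear_combination Real.cosh (k*x)^2 * hp2 + Real.sinh (k*x)^2 * hm2 + ω*hcs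
end

section
/- For every ω ∈ (-1,1) and every x ∈ ℝ, U_ω(x)² · exp( 6i ∫₀ˣ |U_ω(x')|² dx' ) = (1−ω²) · ( 1 + ω cosh(2√(1−ω²) x) + i √(1−ω²) sinh(2√(1−ω²) x) )² / ( ω + cosh(2√(1−ω²) x) )³. -/
open Complex

lemma exp_arctan_aux (a b : ℝ) (ha : 0 < a) :
    ((Real.sqrt (a^2+b^2) : ℝ) : ℂ) * Complex.exp (Real.arctan (b/a) * I) = (a : ℂ) + (b : ℂ) * I := by
  have hd : (0:ℝ) < a^2 + b^2 := by positivity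
  have hr : Real.sqrt (1 + (b/a)^2) = Real.sqrt (a^2+b^2) / a := by
    rw [show (1 + (b/a)^2) = (a^2+b^2)/a^2 by field_simp, Real.sqrt_div hd.le,
      Real.sqrt_sq ha.le]
  have h1 : Real.sqrt (a^2+b^2) * Real.cos (Real.arctan (b/a)) = a := by
    rw [Real.cos_arctan, hr]
    rw [div_div_eq_mul_div]
    field_simp
  have h2 : Real.sqrt (a^2+b^2) * Real.sin (Real.arctan (b/a)) = b := by
    rw [Real.sin_arctan, hr]
    field_simp
  rw [Complex.exp_mul_I]
  push_cast [← Complex.ofReal_cos, ← Complex.ofReal_sin]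
  rw [mul_add, ← mul_assoc]
  norm_cast
  rw [h1, h2]

lemma deriv_aux (ω : ℝ) (hω₁ : -1 < ω) (hω₂ : ω < 1) (u : ℝ) :
    HasDerivAt (fun v : ℝ => Real.arctan ((Real.sqrt (1-ω)/Real.sqrt (1+ω)) *
        (Real.sinh (Real.sqrt (1-ω^2) * v) / Real.cosh (Real.sqrt (1-ω^2) * v))))
      ((1 - ω^2) / (ω + Real.cosh (2 * Real.sqrt (1-ω^2) * u))) u := by
  set k := Real.sqrt (1-ω^2) with hk
  set s := Real.sqrt (1+ω) with hs
  set t := Real.sqrt (1-ω) with ht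
  have h1ω : (0:ℝ) < 1 + ω := by linarith
  have h2ω : (0:ℝ) < 1 - ω := by linarith
  have hs2 : s^2 = 1 + ω := Real.sq_sqrt h1ω.le
  have ht2 : t^2 = 1 - ω := Real.sq_sqrt h2ω.le
  have hkst : k = s * t := by
    rw [hk, hs, ht, ← Real.sqrt_mul h1ω.le]; ring_nf
  have hspos : 0 < s := Real.sqrt_pos.2 h1ω
  have htpos : 0 < t := Real.sqrt_pos.2 h2ω
  have hCpos : 0 < Real.cosh (k*u) := Real.cosh_pos _
  have hlin : HasDerivAt (fun v : ℝ => k * v) k u := by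
    simpa using (hasDerivAt_id u).const_mul k
  have hsinh : HasDerivAt (fun v : ℝ => Real.sinh (k*v)) (Real.cosh (k*u) * k) u :=
    (Real.hasDerivAt_sinh _).comp u hlin
  have hcosh : HasDerivAt (fun v : ℝ => Real.cosh (k*v)) (Real.sinh (k*u) * k) u :=
    (Real.hasDerivAt_cosh _).comp u hlin
  have hq : HasDerivAt (fun v : ℝ => Real.sinh (k*v) / Real.cosh (k*v))
      ((Real.cosh (k*u) * k * Real.cosh (k*u) - Real.sinh (k*u) * (Real.sinh (k*u) * k)) /
        (Real.cosh (k*u))^2) u := hsinh.div hcosh hCpos.ne'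
  have hm := hq.const_mul (t/s)
  have hcomp := (Real.hasDerivAt_arctan ((t/s) * (Real.sinh (k*u) / Real.cosh (k*u)))).comp u hm
  refine hcomp.congr_deriv ?_
  symm
  set C := Real.cosh (k*u)
  set S := Real.sinh (k*u)
  have hC2 : C^2 - S^2 = 1 := Real.cosh_sq_sub_sinh_sq _
  have h2k : Real.cosh (2*k*u) = C^2 + S^2 := by
    rw [show 2*k*u = 2*(k*u) by ring]; exact Real.cosh_two_mul _
  rw [h2k, hkst]
  have hden : 0 < ω + (C^2 + S^2) := by nlinarith
  have hsum : s^2*C^2 + t^2*S^2 = ω + (C^2+S^2) := by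
    linear_combination C^2*hs2 + S^2*ht2 + ω*hC2
  have e1 : (1+(t/s*(S/C))^2) = (ω + (C^2+S^2))/(s^2*C^2) := by
    rw [← hsum]; field_simp
  have e2 : t/s * ((C*(s*t)*C - S*(S*(s*t)))/C^2) = t^2/C^2 := by
    rw [show C*(s*t)*C - S*(S*(s*t)) = s*t*(C^2-S^2) by ring, hC2]; field_simp
  rw [e1, e2, one_div_div]
  have hst : s^2*t^2 = 1 - ω^2 := by linear_combination t^2*hs2 + (1+ω)*ht2
  field_simp
  linear_combination (-1)*hst

lemma integral_aux (ω : ℝ) (hω₁ : -1 < ω) (hω₂ : ω < 1) (x : ℝ) :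
    ∫ u in (0:ℝ)..x, (1 - ω^2) / (ω + Real.cosh (2 * Real.sqrt (1-ω^2) * u))
      = Real.arctan ((Real.sqrt (1-ω)/Real.sqrt (1+ω)) *
        (Real.sinh (Real.sqrt (1-ω^2) * x) / Real.cosh (Real.sqrt (1-ω^2) * x))) := by
  have hcont : Continuous fun u : ℝ => (1 - ω^2) / (ω + Real.cosh (2 * Real.sqrt (1-ω^2) * u)) := by
    apply continuous_const.div (by continuity)
    intro u
    have := Real.one_le_cosh (2 * Real.sqrt (1-ω^2) * u)
    linarith
  have := intervalIntegral.integral_eq_sub_of_hasDerivAt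
    (f := fun v : ℝ => Real.arctan ((Real.sqrt (1-ω)/Real.sqrt (1+ω)) *
        (Real.sinh (Real.sqrt (1-ω^2) * v) / Real.cosh (Real.sqrt (1-ω^2) * v))))
    (fun u _ => deriv_aux ω hω₁ hω₂ u) (hcont.intervalIntegrable 0 x)
  rw [this]
  simp

lemma abs_sq_aux (ω : ℝ) (hω₁ : -1 < ω) (hω₂ : ω < 1) (u : ℝ) :
    ‖solitonU ω u‖^2
      = (1 - ω^2) / (ω + Real.cosh (2 * Real.sqrt (1-ω^2) * u)) := by
  rw [solitonU]
  set k := Real.sqrt (1-ω^2) with hk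
  set s := Real.sqrt (1+ω) with hs
  set t := Real.sqrt (1-ω) with ht
  have h1ω : (0:ℝ) < 1 + ω := by linarith
  have h2ω : (0:ℝ) < 1 - ω := by linarith
  have hs2 : s^2 = 1 + ω := Real.sq_sqrt h1ω.le
  have ht2 : t^2 = 1 - ω := Real.sq_sqrt h2ω.le
  have hk2 : k^2 = 1 - ω^2 := Real.sq_sqrt (by nlinarith)
  set C := Real.cosh (k*u)
  set S := Real.sinh (k*u)
  have hC2 : C^2 - S^2 = 1 := Real.cosh_sq_sub_sinh_sq _
  have h2k : Real.cosh (2*k*u) = C^2 + S^2 := by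
    rw [show 2*k*u = 2*(k*u) by ring]; exact Real.cosh_two_mul _
  have hden : (s*C)^2 + (t*S)^2 = ω + Real.cosh (2*k*u) := by
    rw [h2k]; linear_combination C^2*hs2 + S^2*ht2 + ω*hC2
  rw [norm_div, div_pow, Complex.sq_norm, Complex.sq_norm]
  have h1 : Complex.normSq ((k:ℝ):ℂ) = k^2 := by
    simp [Complex.normSq_apply]; ring
  have h2 : Complex.normSq (((s*C : ℝ):ℂ) + Complex.I * ((t*S : ℝ):ℂ)) = (s*C)^2 + (t*S)^2 := by
    simp [Complex.normSq_apply]; ring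
  rw [h1, h2, hden, hk2]

theorem stmt5 (ω : ℝ) (hω₁ : -1 < ω) (hω₂ : ω < 1) (x : ℝ) :
    (solitonU ω x) ^ 2 *
        Complex.exp (6 * Complex.I *
          ((∫ x' in (0 : ℝ)..x, ‖solitonU ω x'‖ ^ 2 : ℝ) : ℂ))
      = ((1 - ω ^ 2 : ℝ) : ℂ) *
          (((1 + ω * Real.cosh (2 * Real.sqrt (1 - ω ^ 2) * x) : ℝ) : ℂ) +
            Complex.I * ((Real.sqrt (1 - ω ^ 2) * Real.sinh (2 * Real.sqrt (1 - ω ^ 2) * x) : ℝ) : ℂ)) ^ 2 /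
          (((ω + Real.cosh (2 * Real.sqrt (1 - ω ^ 2) * x) : ℝ) : ℂ)) ^ 3 := by
  set k := Real.sqrt (1-ω^2) with hk
  set s := Real.sqrt (1+ω) with hs
  set t := Real.sqrt (1-ω) with ht
  have h1ω : (0:ℝ) < 1 + ω := by linarith
  have h2ω : (0:ℝ) < 1 - ω := by linarith
  have hs2 : s^2 = 1 + ω := Real.sq_sqrt h1ω.le
  have ht2 : t^2 = 1 - ω := Real.sq_sqrt h2ω.le
  have hk2 : k^2 = 1 - ω^2 := Real.sq_sqrt (by nlinarith)
  have hkst : k = s * t := by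
    rw [hk, hs, ht, ← Real.sqrt_mul h1ω.le]; ring_nf
  have hspos : 0 < s := Real.sqrt_pos.2 h1ω
  set C := Real.cosh (k*x) with hC
  set S := Real.sinh (k*x) with hS
  have hCpos : 0 < C := Real.cosh_pos _
  have hC2 : C^2 - S^2 = 1 := Real.cosh_sq_sub_sinh_sq _
  have h2k : Real.cosh (2*k*x) = C^2 + S^2 := by
    rw [show 2*k*x = 2*(k*x) by ring]; exact Real.cosh_two_mul _
  have h2ks : Real.sinh (2*k*x) = 2*S*C := by
    rw [show 2*k*x = 2*(k*x) by ring]; exact Real.sinh_two_mul _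
  set a := s*C with ha
  set b := t*S with hb
  have hapos : 0 < a := mul_pos hspos hCpos
  -- integral value
  have hint : (∫ x' in (0:ℝ)..x, ‖solitonU ω x'‖^2) = Real.arctan (b/a) := by
    rw [intervalIntegral.integral_congr (g := fun u =>
        (1 - ω^2) / (ω + Real.cosh (2 * Real.sqrt (1-ω^2) * u)))
      (fun u _ => abs_sq_aux ω hω₁ hω₂ u)]
    rw [integral_aux ω hω₁ hω₂ x]
    congr 1
    rw [ha, hb]
    field_simp
    rw [← hs, ← ht, ← hk, ← hC, ← hS]; ring
  -- the complex number z
  set z : ℂ := (a:ℂ) + (b:ℂ)*I with hz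
  have hzdef : solitonU ω x = (k:ℂ)/z := by
    rw [solitonU, hz]
    norm_cast
    rw [mul_comm Complex.I ((t*S : ℝ):ℂ)]
  have hzne : z ≠ 0 := by
    intro h
    have : ((a:ℂ) + (b:ℂ)*I).re = 0 := by rw [← hz, h]; simp
    simp at this
    linarith
  set r := Real.sqrt (a^2+b^2) with hr
  have hr2 : r^2 = a^2+b^2 := Real.sq_sqrt (by positivity)
  have hrpos : 0 < r := Real.sqrt_pos.2 (by positivity)
  have hrne : ((r:ℝ):ℂ) ≠ 0 := by
    simp only [ne_eq, Complex.ofReal_eq_zero]; exact hrpos.ne'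
  have hexp : Complex.exp ((Real.arctan (b/a) : ℝ) * I) = z / (r:ℂ) := by
    rw [eq_div_iff hrne, mul_comm]
    exact exp_arctan_aux a b hapos
  have hexp6 : Complex.exp (6 * I * ((Real.arctan (b/a) : ℝ):ℂ)) = (z/(r:ℂ))^6 := by
    rw [← hexp, ← Complex.exp_nat_mul]
    norm_num
    ring_nf
  -- identities for z^2, r^2
  have hab1 : a^2 - b^2 = 1 + ω * Real.cosh (2*k*x) := by
    rw [h2k, ha, hb]; linear_combination C^2*hs2 - S^2*ht2 + hC2
  have hab2 : 2*(a*b) = k * Real.sinh (2*k*x) := by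
    rw [h2ks, ha, hb, hkst]; ring
  have habr : a^2 + b^2 = ω + Real.cosh (2*k*x) := by
    rw [h2k, ha, hb]; linear_combination C^2*hs2 + S^2*ht2 + ω*hC2
  have hz2 : z^2 = ((1 + ω * Real.cosh (2*k*x) : ℝ):ℂ) + I * ((k * Real.sinh (2*k*x) : ℝ):ℂ) := by
    rw [← hab1, ← hab2, hz]
    push_cast
    have : I^2 = -1 := Complex.I_sq
    ring_nf
    rw [Complex.I_sq]
    ring
  have hr6 : ((r:ℝ):ℂ)^6 = ((ω + Real.cosh (2*k*x) : ℝ):ℂ)^3 := by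
    rw [← habr, ← hr2]
    push_cast
    ring
  -- final computation
  rw [hint, hzdef, hexp6, ← hz2, ← hr6, div_pow, div_pow]
  rw [show ((1-ω^2:ℝ):ℂ) = ((k:ℝ):ℂ)^2 by norm_cast; exact hk2.symm]
  have hr6ne : ((r:ℝ):ℂ)^6 ≠ 0 := pow_ne_zero _ hrne
  field_simp
end

section
/- For every ω ∈ (-1,1), the squared L² norm of the MTM soliton profile equals arccos(ω): ∫_ℝ |U_ω(x)|² dx = arccos(ω). -/
open Complex MeasureTheory

open Real Filter Set in
private lemma tanh_tendsto_one : Tendsto (fun y : ℝ => Real.sinh y / Real.cosh y)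
    atTop (nhds 1) := by
  have key : ∀ y : ℝ, Real.sinh y / Real.cosh y
      = (1 - Real.exp (-(2*y))) / (1 + Real.exp (-(2*y))) := by
    intro y
    have h2 : Real.exp (-(2*y)) = Real.exp (-y) * Real.exp (-y) := by
      rw [← Real.exp_add]; ring_nf
    have h3 : Real.exp y * Real.exp (-y) = 1 := by rw [← Real.exp_add]; simp
    rw [Real.sinh_eq, Real.cosh_eq]
    have hcp : (0:ℝ) < Real.exp y + Real.exp (-y) := by positivity
    have hdp : (0:ℝ) < 1 + Real.exp (-(2*y)) := by positivity
    rw [div_eq_div_iff (by positivity) hdp.ne']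
    linear_combination Real.exp y * h2 + Real.exp (-y) * h3
  simp only [key]
  have he : Tendsto (fun y : ℝ => Real.exp (-(2*y))) atTop (nhds 0) := by
    have h2 : Tendsto (fun y : ℝ => 2*y) atTop atTop :=
      tendsto_id.const_mul_atTop two_pos
    exact Real.tendsto_exp_neg_atTop_nhds_zero.comp h2
  have hnum : Tendsto (fun y : ℝ => 1 - Real.exp (-(2*y))) atTop (nhds 1) := by
    simpa using tendsto_const_nhds.sub he
  have hden : Tendsto (fun y : ℝ => 1 + Real.exp (-(2*y))) atTop (nhds 1) := by
    simpa using tendsto_const_nhds.add he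
  have h := hnum.div hden one_ne_zero; rw [div_one] at h; exact h

set_option maxHeartbeats 1000000 in
open Real Filter Set in
theorem stmt6 (ω : ℝ) (hω₁ : -1 < ω) (hω₂ : ω < 1) :
    (∫ x : ℝ, ‖solitonU ω x‖ ^ 2) = Real.arccos ω := by
  have h1p : (0:ℝ) < 1 + ω := by linarith
  have h1m : (0:ℝ) < 1 - ω := by linarith
  have hsq : (0:ℝ) < 1 - ω ^ 2 := by nlinarith
  set k : ℝ := Real.sqrt (1 - ω ^ 2) with hk
  have hk2 : k ^ 2 = 1 - ω ^ 2 := Real.sq_sqrt hsq.le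
  have hkpos : 0 < k := Real.sqrt_pos.2 hsq
  have ha2 : Real.sqrt (1 + ω) ^ 2 = 1 + ω := Real.sq_sqrt h1p.le
  have hb2 : Real.sqrt (1 - ω) ^ 2 = 1 - ω := Real.sq_sqrt h1m.le
  set c : ℝ := Real.sqrt ((1 - ω) / (1 + ω)) with hc
  have hc2 : c ^ 2 = (1 - ω) / (1 + ω) := Real.sq_sqrt (by positivity)
  have hcc : c ^ 2 * (1 + ω) = 1 - ω := by rw [hc2]; field_simp
  have hcnn : 0 ≤ c := Real.sqrt_nonneg _
  -- the pointwise value of |U|^2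
  have habs : ∀ x : ℝ, ‖solitonU ω x‖ ^ 2
      = (1 - ω ^ 2) / (Real.cosh (2 * (k * x)) + ω) := by
    intro x
    rw [solitonU, norm_div, div_pow, Complex.sq_norm, Complex.sq_norm, ← hk]
    set ch := Real.cosh (k * x) with hch
    set sh := Real.sinh (k * x) with hsh
    have hpyth : ch ^ 2 = sh ^ 2 + 1 := Real.cosh_sq _
    have hc2m : Real.cosh (2 * (k * x)) = ch ^ 2 + sh ^ 2 := Real.cosh_two_mul _
    have hnum : Complex.normSq ((k : ℝ) : ℂ) = 1 - ω ^ 2 := by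
      rw [Complex.normSq_ofReal, ← hk2]; ring
    have hden2 : Complex.normSq (((Real.sqrt (1 + ω) * ch : ℝ) : ℂ)
        + Complex.I * ((Real.sqrt (1 - ω) * sh : ℝ) : ℂ))
        = (Real.sqrt (1 + ω) * ch) ^ 2 + (Real.sqrt (1 - ω) * sh) ^ 2 := by
      simp [Complex.normSq_apply]; ring
    rw [hnum, hden2, hc2m]
    congr 1
    rw [mul_pow, mul_pow, ha2, hb2]
    linear_combination ω * hpyth
  -- the antiderivative
  set F : ℝ → ℝ := fun x => Real.arctan (c * (Real.sinh (k * x) / Real.cosh (k * x)))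
    with hF
  set g : ℝ → ℝ := fun x => (1 - ω ^ 2) / (Real.cosh (2 * (k * x)) + ω) with hg
  have hderiv : ∀ x : ℝ, HasDerivAt F (g x) x := by
    intro x
    set ch := Real.cosh (k * x) with hch
    set sh := Real.sinh (k * x) with hsh
    have hchpos : 0 < ch := Real.cosh_pos _
    have hpyth : ch ^ 2 = sh ^ 2 + 1 := Real.cosh_sq _
    have hc2m : Real.cosh (2 * (k * x)) = ch ^ 2 + sh ^ 2 := Real.cosh_two_mul _
    have hkx : HasDerivAt (fun x : ℝ => k * x) k x := by
      simpa using (hasDerivAt_id x).const_mul k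
    have hsinh : HasDerivAt (fun x : ℝ => Real.sinh (k * x)) (ch * k) x :=
      (Real.hasDerivAt_sinh (k * x)).comp x hkx
    have hcosh : HasDerivAt (fun x : ℝ => Real.cosh (k * x)) (sh * k) x :=
      (Real.hasDerivAt_cosh (k * x)).comp x hkx
    have ht : HasDerivAt (fun x : ℝ => Real.sinh (k * x) / Real.cosh (k * x))
        ((ch * k * ch - sh * (sh * k)) / ch ^ 2) x :=
      hsinh.div hcosh hchpos.ne'
    have hct : HasDerivAt (fun x : ℝ => c * (Real.sinh (k * x) / Real.cosh (k * x)))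
        (c * ((ch * k * ch - sh * (sh * k)) / ch ^ 2)) x := ht.const_mul c
    have harc := (Real.hasDerivAt_arctan (c * (sh / ch))).comp x hct
    rw [show F = Real.arctan ∘ (fun x : ℝ => c * (Real.sinh (k * x) / Real.cosh (k * x))) from rfl]
    refine harc.congr_deriv ?_
    symm
    show (1 - ω ^ 2) / (Real.cosh (2 * (k * x)) + ω) = _
    have hck : c * k = 1 - ω := by
      rw [hc, hk, ← Real.sqrt_mul (by positivity)]
      rw [show (1 - ω) / (1 + ω) * (1 - ω ^ 2) = (1 - ω) ^ 2 by field_simp; ring]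
      exact Real.sqrt_sq h1m.le
    have hqpos : (0:ℝ) < ch ^ 2 + c ^ 2 * sh ^ 2 := by positivity
    have hA : (0:ℝ) < 1 + (c * (sh / ch)) ^ 2 := by positivity
    have hB : 1 + (c * (sh / ch)) ^ 2 = (ch ^ 2 + c ^ 2 * sh ^ 2) / ch ^ 2 := by
      field_simp
    have h1 : 1 / (1 + (c * (sh / ch)) ^ 2) * (c * ((ch * k * ch - sh * (sh * k)) / ch ^ 2))
        = (c * k) * (ch ^ 2 - sh ^ 2) / (ch ^ 2 + c ^ 2 * sh ^ 2) := by
      rw [hB]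
      field_simp
    have hdpos : (0:ℝ) < Real.cosh (2 * (k * x)) + ω := by
      have := Real.one_le_cosh (2 * (k * x)); linarith
    rw [hc2m] at hdpos ⊢
    rw [h1, show ch ^ 2 - sh ^ 2 = 1 by linarith [hpyth], mul_one, hck]
    rw [div_eq_div_iff hdpos.ne' hqpos.ne']
    linear_combination ((1 - ω) * sh ^ 2) * hcc + ((1 - ω) * ω) * hpyth
  -- limit at +infinity
  have hlim : Tendsto F atTop (nhds (Real.arctan c)) := by
    have hkx : Tendsto (fun x : ℝ => k * x) atTop atTop :=
      tendsto_id.const_mul_atTop hkpos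
    have ht : Tendsto (fun x : ℝ => Real.sinh (k * x) / Real.cosh (k * x))
        atTop (nhds 1) := tanh_tendsto_one.comp hkx
    have : Tendsto (fun x : ℝ => c * (Real.sinh (k * x) / Real.cosh (k * x)))
        atTop (nhds c) := by simpa using tendsto_const_nhds.mul ht
    exact (Real.continuous_arctan.tendsto c).comp this
  -- positivity of g
  have hgpos : ∀ x : ℝ, 0 ≤ g x := by
    intro x
    have : (0:ℝ) < Real.cosh (2 * (k * x)) + ω := by
      have := Real.one_le_cosh (2 * (k * x)); linarith
    positivity
  -- integral over Ioi 0
  have hIoi : ∫ x in Ioi (0:ℝ), g x = Real.arctan c := by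
    have := MeasureTheory.integral_Ioi_of_hasDerivAt_of_nonneg'
      (g := F) (g' := g) (a := 0) (l := Real.arctan c)
      (fun x _ => hderiv x) (fun x _ => hgpos x) hlim
    simpa [hF] using this
  -- reduce the full integral by evenness
  have heven : ∀ x : ℝ, g |x| = g x := by
    intro x
    have hce : Real.cosh (2 * (k * |x|)) = Real.cosh (2 * (k * x)) := by
      rcases abs_cases x with ⟨h, _⟩ | ⟨h, _⟩
      · rw [h]
      · rw [h]; rw [show 2 * (k * -x) = -(2 * (k * x)) by ring, Real.cosh_neg]
    simp only [hg, hce]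
  calc (∫ x : ℝ, ‖solitonU ω x‖ ^ 2)
      = ∫ x : ℝ, g x := by simp only [habs, hg]
    _ = ∫ x : ℝ, g |x| := by simp only [heven]
    _ = 2 * ∫ x in Ioi (0:ℝ), g x := integral_comp_abs
    _ = 2 * Real.arctan c := by rw [hIoi]
    _ = Real.arccos ω := by
        have hcos : Real.cos (2 * Real.arctan c) = ω := by
          rw [Real.cos_two_mul, Real.cos_arctan]
          have h1c : (0:ℝ) < 1 + c ^ 2 := by positivity
          rw [div_pow, one_pow, Real.sq_sqrt h1c.le, hc2]
          field_simp
          ring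
        have hnn : 0 ≤ 2 * Real.arctan c := by
          have : 0 ≤ Real.arctan c := by
            rw [← Real.arctan_zero]
            exact Real.arctan_strictMono.monotone hcnn
          linarith
        have hle : 2 * Real.arctan c ≤ Real.pi := by
          have := Real.arctan_lt_pi_div_two c
          linarith
        rw [← hcos, Real.arccos_cos hnn hle]
end

section
/- For every ω ∈ (-1,1), ∫_ℝ (1 + ω cosh(2z)) / (ω + cosh(2z))² dz = 1. -/
open MeasureTheory Real Filter Set

theorem stmt7 (ω : ℝ) (hω₁ : -1 < ω) (hω₂ : ω < 1) :
    (∫ z : ℝ, (1 + ω * Real.cosh (2 * z)) / (ω + Real.cosh (2 * z)) ^ 2) = 1 := by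
  set f' : ℝ → ℝ := fun z => (1 + ω * Real.cosh (2 * z)) / (ω + Real.cosh (2 * z)) ^ 2 with hf'
  set F : ℝ → ℝ := fun z => Real.sinh (2 * z) / (2 * (ω + Real.cosh (2 * z))) with hF
  have hω : |ω| < 1 := abs_lt.mpr ⟨hω₁, hω₂⟩
  have hden : ∀ z : ℝ, 0 < ω + Real.cosh (2 * z) := by
    intro z
    have := Real.one_le_cosh (2 * z)
    linarith
  -- derivative
  have hderiv : ∀ z : ℝ, HasDerivAt F (f' z) z := by
    intro z
    have h1 : HasDerivAt (fun z : ℝ => Real.sinh (2 * z)) (Real.cosh (2 * z) * 2) z := by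
      simpa [Function.comp_def] using (Real.hasDerivAt_sinh (2 * z)).comp z ((hasDerivAt_id z).const_mul 2)
    have h2 : HasDerivAt (fun z : ℝ => 2 * (ω + Real.cosh (2 * z))) (2 * (Real.sinh (2 * z) * 2)) z := by
      have : HasDerivAt (fun z : ℝ => Real.cosh (2 * z)) (Real.sinh (2 * z) * 2) z := by
        simpa [Function.comp_def] using (Real.hasDerivAt_cosh (2 * z)).comp z ((hasDerivAt_id z).const_mul 2)
      simpa using ((this.const_add ω).const_mul 2)
    have h0 : (2 : ℝ) * (ω + Real.cosh (2 * z)) ≠ 0 := by have := hden z; positivity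
    have : HasDerivAt F _ z := h1.div h2 h0
    convert this using 1
    have hc := Real.cosh_sq_sub_sinh_sq (2 * z)
    have h0' : (ω + Real.cosh (2 * z)) ≠ 0 := (hden z).ne'
    show (1 + ω * Real.cosh (2 * z)) / (ω + Real.cosh (2 * z)) ^ 2 = _
    field_simp
    nlinarith [hc]
  -- integrability
  have hcont : Continuous f' := by
    apply Continuous.div
    · continuity
    · continuity
    · intro x; exact pow_ne_zero 2 (hden x).ne'
  have hexp_le : ∀ x : ℝ, Real.exp (2 * x) ≤ 2 * Real.cosh (2 * x) := by
    intro x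
    rw [Real.cosh_eq]
    have := Real.exp_pos (-(2 * x))
    linarith
  have hbound : ∀ x : ℝ, ‖f' x‖ ≤ 4 / (1 - |ω|) ^ 2 * ‖Real.exp (-(2 * x))‖ := by
    intro x
    set c := Real.cosh (2 * x) with hc
    have hc1 : (1 : ℝ) ≤ c := Real.one_le_cosh (2 * x)
    set e := Real.exp (2 * x) with he
    have hepos : 0 < e := Real.exp_pos _
    have he2c : e ≤ 2 * c := hexp_le x
    have habs : |1 + ω * c| ≤ 2 * c := by
      rw [abs_le]
      constructor <;> nlinarith [le_abs_self ω, neg_abs_le ω, abs_nonneg ω]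
    have hlow : (1 - |ω|) * c ≤ ω + c := by nlinarith [neg_abs_le ω, abs_nonneg ω]
    have hD : (0:ℝ) < 1 - |ω| := by linarith
    have key : |1 + ω * c| * ((1 - |ω|) ^ 2 * e) ≤ 4 * (ω + c) ^ 2 := by
      nlinarith [mul_le_mul habs (mul_le_mul_of_nonneg_left he2c (by positivity : (0:ℝ) ≤ (1 - |ω|)^2)) (by positivity) (by positivity : (0:ℝ) ≤ 2 * c),
        mul_le_mul hlow hlow (by positivity) (le_trans (by positivity) hlow), abs_nonneg (1 + ω * c)]
    have hnorm : ‖f' x‖ = |1 + ω * c| / (ω + c) ^ 2 := by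
      rw [Real.norm_eq_abs, abs_div, abs_of_pos (pow_pos (hden x) 2)]
    rw [hnorm, Real.norm_eq_abs, abs_of_pos (Real.exp_pos _)]
    have hexpneg : Real.exp (-(2 * x)) = e⁻¹ := by rw [Real.exp_neg]
    rw [hexpneg, div_le_iff₀ (pow_pos (hden x) 2)]
    have : 4 / (1 - |ω|) ^ 2 * e⁻¹ * (ω + c) ^ 2 = 4 * (ω + c) ^ 2 / ((1 - |ω|) ^ 2 * e) := by
      field_simp
    rw [this, le_div_iff₀ (by positivity)]
    exact key
  have hbigO : f' =O[atTop] fun x => Real.exp (-(2 * x)) := by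
    rw [Asymptotics.isBigO_iff]
    exact ⟨4 / (1 - |ω|) ^ 2, Eventually.of_forall hbound⟩
  have hintAt : IntegrableAtFilter (fun x => Real.exp (-(2 * x))) atTop volume := by
    refine ⟨Ioi 0, Ioi_mem_atTop 0, ?_⟩
    simpa [neg_mul] using exp_neg_integrableOn_Ioi 0 (by norm_num : (0:ℝ) < 2)
  have hsymm : (norm ∘ f') =ᵐ[volume] (norm ∘ f' ∘ Neg.neg) := by
    refine Eventually.of_forall fun x => ?_
    simp [hf', Function.comp, mul_neg, Real.cosh_neg]
  have hint : Integrable f' :=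
    hcont.locallyIntegrable.integrable_of_isBigO_atTop_of_norm_isNegInvariant hsymm hbigO hintAt
  -- limits
  have he_top2 : Tendsto (fun z : ℝ => Real.exp (-(2 * z))) atTop (nhds 0) := by
    exact Real.tendsto_exp_atBot.comp
      (tendsto_neg_atTop_atBot.comp (tendsto_id.const_mul_atTop (by norm_num : (0:ℝ) < 2)))
  have he_top4 : Tendsto (fun z : ℝ => Real.exp (-(4 * z))) atTop (nhds 0) := by
    exact Real.tendsto_exp_atBot.comp
      (tendsto_neg_atTop_atBot.comp (tendsto_id.const_mul_atTop (by norm_num : (0:ℝ) < 4)))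
  have he_bot2 : Tendsto (fun z : ℝ => Real.exp (2 * z)) atBot (nhds 0) := by
    apply Real.tendsto_exp_atBot.comp
    exact tendsto_id.const_mul_atBot (by norm_num : (0:ℝ) < 2)
  have he_bot4 : Tendsto (fun z : ℝ => Real.exp (4 * z)) atBot (nhds 0) := by
    apply Real.tendsto_exp_atBot.comp
    exact tendsto_id.const_mul_atBot (by norm_num : (0:ℝ) < 4)
  have hFtop_eq : ∀ z : ℝ, F z = (1 - Real.exp (-(4 * z))) / (2 * (2 * ω * Real.exp (-(2 * z)) + 1 + Real.exp (-(4 * z)))) := by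
    intro z
    have h4 : Real.exp (-(4 * z)) = (Real.exp (2 * z))⁻¹ * (Real.exp (2 * z))⁻¹ := by
      rw [← Real.exp_neg, ← Real.exp_add]; ring_nf
    have h2 : Real.exp (-(2 * z)) = (Real.exp (2 * z))⁻¹ := by rw [Real.exp_neg]
    have hne : Real.exp (2 * z) ≠ 0 := (Real.exp_pos _).ne'
    have hden2 : 2 * ω * Real.exp (-(2 * z)) + 1 + Real.exp (-(4 * z)) ≠ 0 := by
      have : 2 * ω * Real.exp (-(2 * z)) + 1 + Real.exp (-(4 * z)) = 2 * Real.exp (-(2 * z)) * (ω + Real.cosh (2 * z)) := by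
        rw [Real.cosh_eq, h4, h2]; field_simp; ring
      rw [this]
      have := hden z
      positivity
    have hb : (2 : ℝ) * (ω + Real.cosh (2 * z)) ≠ 0 := by have := hden z; positivity
    have hd : (2 : ℝ) * (2 * ω * Real.exp (-(2 * z)) + 1 + Real.exp (-(4 * z))) ≠ 0 := by
      intro h
      exact hden2 (by linarith [mul_eq_zero.mp h |>.resolve_left (by norm_num : (2:ℝ) ≠ 0)])
    rw [hF]
    show Real.sinh (2 * z) / (2 * (ω + Real.cosh (2 * z))) = _
    rw [div_eq_div_iff hb hd, Real.sinh_eq, Real.cosh_eq, h4, h2]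
    field_simp
    ring
  have hFbot_eq : ∀ z : ℝ, F z = (Real.exp (4 * z) - 1) / (2 * (2 * ω * Real.exp (2 * z) + Real.exp (4 * z) + 1)) := by
    intro z
    have h4 : Real.exp (4 * z) = Real.exp (2 * z) * Real.exp (2 * z) := by
      rw [← Real.exp_add]; ring_nf
    have hne : Real.exp (2 * z) ≠ 0 := (Real.exp_pos _).ne'
    have hden2 : 2 * ω * Real.exp (2 * z) + Real.exp (4 * z) + 1 ≠ 0 := by
      have : 2 * ω * Real.exp (2 * z) + Real.exp (4 * z) + 1 = 2 * Real.exp (2 * z) * (ω + Real.cosh (2 * z)) := by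
        rw [Real.cosh_eq, h4, Real.exp_neg]; field_simp; ring
      rw [this]
      have := hden z
      positivity
    have hb : (2 : ℝ) * (ω + Real.cosh (2 * z)) ≠ 0 := by have := hden z; positivity
    have hd : (2 : ℝ) * (2 * ω * Real.exp (2 * z) + Real.exp (4 * z) + 1) ≠ 0 := by
      intro h
      exact hden2 (by linarith [mul_eq_zero.mp h |>.resolve_left (by norm_num : (2:ℝ) ≠ 0)])
    rw [hF]
    show Real.sinh (2 * z) / (2 * (ω + Real.cosh (2 * z))) = _
    rw [div_eq_div_iff hb hd, Real.sinh_eq, Real.cosh_eq, Real.exp_neg, h4]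
    field_simp
    ring
  have htop : Tendsto F atTop (nhds (1 / 2)) := by
    have h : Tendsto (fun z : ℝ => (1 - Real.exp (-(4 * z))) / (2 * (2 * ω * Real.exp (-(2 * z)) + 1 + Real.exp (-(4 * z))))) atTop (nhds ((1 - 0) / (2 * (2 * ω * 0 + 1 + 0)))) := by
      apply Tendsto.div
      · exact (tendsto_const_nhds).sub he_top4
      · exact tendsto_const_nhds.mul (((tendsto_const_nhds.mul he_top2).add tendsto_const_nhds).add he_top4)
      · norm_num
    norm_num at h
    exact (Tendsto.congr (fun z => (hFtop_eq z).symm) h)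
  have hbot : Tendsto F atBot (nhds (-(1 / 2))) := by
    have h : Tendsto (fun z : ℝ => (Real.exp (4 * z) - 1) / (2 * (2 * ω * Real.exp (2 * z) + Real.exp (4 * z) + 1))) atBot (nhds ((0 - 1) / (2 * (2 * ω * 0 + 0 + 1)))) := by
      apply Tendsto.div
      · exact he_bot4.sub tendsto_const_nhds
      · exact tendsto_const_nhds.mul (((tendsto_const_nhds.mul he_bot2).add he_bot4).add tendsto_const_nhds)
      · norm_num
    norm_num at h
    exact (Tendsto.congr (fun z => (hFbot_eq z).symm) h)
  have := integral_of_hasDerivAt_of_tendsto hderiv hint hbot htop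
  rw [hf'] at this
  rw [this]
  norm_num
end

section
/- For every ω ∈ (-1,1), the function ψ_c(z) = sinh(2z)/(ω + cosh(2z)) satisfies −ψ_c''(z) + [ 1 − 8(1−ω²)/(ω + cosh(2z))² − 4ω/(ω + cosh(2z)) ] ψ_c(z) = ψ_c(z) for all z ∈ ℝ; i.e. ψ_c is a bounded solution at the end-point λ = 1 of the continuous spectrum of the operator −d²/dz² + 1 − 8(1−ω²)/(ω+cosh 2z)² − 4ω/(ω+cosh 2z). -/
open Real

lemma denom_pos (ω : ℝ) (hω₁ : -1 < ω) (z : ℝ) : 0 < ω + Real.cosh (2 * z) := by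
  have := Real.one_le_cosh (2 * z)
  linarith

lemma hd1 (ω : ℝ) (hω₁ : -1 < ω) (z : ℝ) :
    HasDerivAt (fun z : ℝ => Real.sinh (2 * z) / (ω + Real.cosh (2 * z)))
      ((2 * ω * Real.cosh (2 * z) + 2) / (ω + Real.cosh (2 * z)) ^ 2) z := by
  have hne : ω + Real.cosh (2 * z) ≠ 0 := (denom_pos ω hω₁ z).ne'
  have hs : HasDerivAt (fun z : ℝ => Real.sinh (2 * z)) (2 * Real.cosh (2 * z)) z := by
    have := (Real.hasDerivAt_sinh (2 * z)).comp z ((hasDerivAt_id z).const_mul 2)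
    simpa [Function.comp_def, mul_comm] using this
  have hc : HasDerivAt (fun z : ℝ => ω + Real.cosh (2 * z)) (2 * Real.sinh (2 * z)) z := by
    have := (Real.hasDerivAt_cosh (2 * z)).comp z ((hasDerivAt_id z).const_mul 2)
    simpa [Function.comp_def, mul_comm] using (this.const_add ω)
  have h := hs.fun_div hc hne
  refine h.congr_deriv ?_
  have hid : Real.cosh (2 * z) ^ 2 = Real.sinh (2 * z) ^ 2 + 1 := Real.cosh_sq (2 * z)
  field_simp
  ring_nf
  ring_nf at hid
  linarith [hid]

lemma hd2 (ω : ℝ) (hω₁ : -1 < ω) (z : ℝ) :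
    HasDerivAt (fun z : ℝ => (2 * ω * Real.cosh (2 * z) + 2) / (ω + Real.cosh (2 * z)) ^ 2)
      ((4 * ω * Real.sinh (2 * z) * (ω + Real.cosh (2 * z))
        - (2 * ω * Real.cosh (2 * z) + 2) * (4 * Real.sinh (2 * z)))
        / (ω + Real.cosh (2 * z)) ^ 3) z := by
  have hpos := denom_pos ω hω₁ z
  have hne : ω + Real.cosh (2 * z) ≠ 0 := hpos.ne'
  have hne2 : (ω + Real.cosh (2 * z)) ^ 2 ≠ 0 := pow_ne_zero _ hne
  have hc : HasDerivAt (fun z : ℝ => ω + Real.cosh (2 * z)) (2 * Real.sinh (2 * z)) z := by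
    have := (Real.hasDerivAt_cosh (2 * z)).comp z ((hasDerivAt_id z).const_mul 2)
    simpa [Function.comp_def, mul_comm] using (this.const_add ω)
  have hnum : HasDerivAt (fun z : ℝ => 2 * ω * Real.cosh (2 * z) + 2)
      (2 * ω * (2 * Real.sinh (2 * z))) z := by
    have := (Real.hasDerivAt_cosh (2 * z)).comp z ((hasDerivAt_id z).const_mul 2)
    have h2 : HasDerivAt (fun z : ℝ => Real.cosh (2 * z)) (2 * Real.sinh (2 * z)) z := by
      simpa [Function.comp_def, mul_comm] using this
    simpa using ((h2.const_mul (2 * ω)).add_const 2)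
  have hden : HasDerivAt (fun z : ℝ => (ω + Real.cosh (2 * z)) ^ 2)
      (2 * (ω + Real.cosh (2 * z)) * (2 * Real.sinh (2 * z))) z := by
    have := hc.fun_pow 2
    simpa [mul_comm, mul_assoc] using this
  have h := hnum.fun_div hden hne2
  refine h.congr_deriv ?_
  field_simp
  ring

theorem stmt10 (ω : ℝ) (hω₁ : -1 < ω) (hω₂ : ω < 1) (z : ℝ) :
    -deriv (deriv (fun z : ℝ => Real.sinh (2 * z) / (ω + Real.cosh (2 * z)))) z
        + (1 - 8 * (1 - ω ^ 2) / (ω + Real.cosh (2 * z)) ^ 2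
            - 4 * ω / (ω + Real.cosh (2 * z))) *
          (Real.sinh (2 * z) / (ω + Real.cosh (2 * z)))
      = Real.sinh (2 * z) / (ω + Real.cosh (2 * z)) := by
  have hderiv : deriv (fun z : ℝ => Real.sinh (2 * z) / (ω + Real.cosh (2 * z)))
      = fun z => (2 * ω * Real.cosh (2 * z) + 2) / (ω + Real.cosh (2 * z)) ^ 2 := by
    funext x
    exact (hd1 ω hω₁ x).deriv
  rw [hderiv, (hd2 ω hω₁ z).deriv]
  have hpos := denom_pos ω hω₁ z
  have hne : ω + Real.cosh (2 * z) ≠ 0 := hpos.ne'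
  have hid : Real.cosh (2 * z) ^ 2 = Real.sinh (2 * z) ^ 2 + 1 := Real.cosh_sq (2 * z)
  field_simp
  nlinarith [hid, sq_nonneg (ω + Real.cosh (2*z)), hpos]
end

section
/- For every ω ∈ (-1,1) with ω ≠ 0, let f(x) = −(x/2) U_ω(x) − (i/(4ω)) U_ω(x) and g(x) = (x/2) conj(U_ω(x)) − (i/(4ω)) conj(U_ω(x)). Then for all x ∈ ℝ: −f''(x) − 2i|U_ω(x)|² f'(x) + (−2|U_ω(x)|⁴ − U_ω(x)² + conj(U_ω(x))² − 2ω|U_ω(x)|² + 1 − ω²) f(x) + 2ω U_ω(x)² g(x) = U_ω'(x); i.e. L₋ applied to the vector (−x/2)(U_ω, −conj(U_ω)) + (1/(4iω))(U_ω, conj(U_ω)) equals (U_ω', −conj(U_ω')). -/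
open Complex

noncomputable def mtmD (a b t : ℝ) : ℂ :=
  (a : ℂ) * ((Real.cosh (a * b * t) : ℝ) : ℂ) +
    Complex.I * ((b : ℂ) * ((Real.sinh (a * b * t) : ℝ) : ℂ))

noncomputable def mtmDb (a b t : ℝ) : ℂ :=
  (a : ℂ) * ((Real.cosh (a * b * t) : ℝ) : ℂ) -
    Complex.I * ((b : ℂ) * ((Real.sinh (a * b * t) : ℝ) : ℂ))

noncomputable def mtmE (a b t : ℝ) : ℂ :=
  (a : ℂ) * ((Real.sinh (a * b * t) : ℝ) : ℂ) +
    Complex.I * ((b : ℂ) * ((Real.cosh (a * b * t) : ℝ) : ℂ))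

noncomputable def mtmV (ω : ℝ) (t : ℝ) : ℂ :=
  -Complex.I * ((ω : ℂ) * solitonU ω t - (starRingEnd ℂ) (solitonU ω t)
    + 2 * (solitonU ω t * solitonU ω t) * (starRingEnd ℂ) (solitonU ω t))

lemma mtm_ode_core (A B c s W u ub u1 d e : ℂ)
    (ha : A ^ 2 = 1 + W) (hb : B ^ 2 = 1 - W) (hcs : c ^ 2 - s ^ 2 = 1)
    (hd : (A * c + Complex.I * (B * s)) * d = 1)
    (he : (A * c - Complex.I * (B * s)) * e = 1)
    (hu : u = A * B * d) (hub : ub = A * B * e)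
    (hu1 : u1 = -((A * B) ^ 2 * (A * s + Complex.I * (B * c))) * d ^ 2) :
    u1 = -Complex.I * (W * u - ub + 2 * (u * u) * ub) := by
  subst hu hub hu1
  apply mul_right_cancel₀ (show (A * c + Complex.I * (B * s)) ^ 2
      * (A * c - Complex.I * (B * s)) ≠ 0 from
    mul_ne_zero (pow_ne_zero 2 (left_ne_zero_of_mul_eq_one hd))
      (left_ne_zero_of_mul_eq_one he))
  linear_combination ((-1)*A*B^3*s^2*W*Complex.I^3 + (1)*A^2*B^4*c*s*Complex.I^2 + (1)*A^2*B^5*c*s^2*d*Complex.I^3 + (1)*A^3*B*c^2*W*Complex.I + (1)*A^3*B^3*s^2*Complex.I + (-1)*A^3*B^3*c^2*Complex.I + (-2)*A^3*B^4*s*e*Complex.I^2 + (1)*A^3*B^4*s^3*d*Complex.I^2 + (-2)*A^3*B^5*s^2*d*e*Complex.I^3 + (-1)*A^4*B^2*c*s + (2)*A^4*B^3*c*e*Complex.I + (-1)*A^4*B^3*c^3*d*Complex.I + (-1)*A^5*B^2*c^2*s*d + (2)*A^5*B^3*c^2*d*e*Complex.I) * hd + ((-1)*A*B^3*s^2*Complex.I^3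 + (-2)*A^2*B^2*c*s*Complex.I^2 + (-1)*A^3*B*c^2*Complex.I + (2)*A^3*B^3*Complex.I) * he + ((-1)*B^2*c*s + (-2)*B^2*c*s*Complex.I^2 + (-1)*B^2*c*s*W + (1)*B^4*c*s*Complex.I^2 + (-1)*A*B*c^2*Complex.I + (1)*A*B*c^2*W*Complex.I + (2)*A*B^3*Complex.I + (1)*A*B^3*s^2*Complex.I + (-1)*A*B^3*c^2*Complex.I + (-1)*A^2*B^2*c*s) * ha + ((-1)*c*s + (-1)*c*s*Complex.I^2 + (-2)*c*s*W + (-2)*c*s*W*Complex.I^2 + (-1)*c*s*W^2 + (-1)*c*s*W^2*Complex.I^2 + (1)*B^2*c*s*Complex.I^2 + (1)*B^2*c*s*W*Complex.I^2 + (2)*A*B*Complex.I + (2)*A*B*W*Complex.I + (1)*A*B*s^2*Complex.I + (-1)*A*B*s^2*Complex.I^3 + (1)*A*B*s^2*W*Complex.I + (-1)*A*B*s^2*W*Complex.I^3 + (-1)*A*B*c^2*Complex.I + (-1)*A*B*c^2*W*Complex.I) * hb + ((-2)*A*B*Complex.I + (2)*A*B*W^2*Complex.I) * hcs + ((-1)*c*s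 + (-1)*c*s*W + (1)*c*s*W^2 + (1)*c*s*W^3 + (-1)*A*B*s^2*Complex.I + (1)*A*B*s^2*W^2*Complex.I) * Complex.I_sq

lemma mtm_cons_core (A B c s W u ub d e : ℂ)
    (ha : A ^ 2 = 1 + W) (hb : B ^ 2 = 1 - W) (hcs : c ^ 2 - s ^ 2 = 1)
    (hd : (A * c + Complex.I * (B * s)) * d = 1)
    (he : (A * c - Complex.I * (B * s)) * e = 1)
    (hu : u = A * B * d) (hub : ub = A * B * e) :
    u ^ 2 + ub ^ 2 = 2 * W * (u * ub) + 2 * (u * ub) ^ 2 := by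
  subst hu hub
  apply mul_right_cancel₀ (show (A * c + Complex.I * (B * s)) ^ 2
      * (A * c - Complex.I * (B * s)) ^ 2 ≠ 0 from
    mul_ne_zero (pow_ne_zero 2 (left_ne_zero_of_mul_eq_one hd))
      (pow_ne_zero 2 (left_ne_zero_of_mul_eq_one he)))
  linear_combination ((1)*A^2*B^4*s^2*Complex.I^2 + (1)*A^2*B^5*s^3*d*Complex.I^3 + (-2)*A^2*B^5*s^3*W*e*Complex.I^3 + (-2)*A^3*B^3*c*s*Complex.I + (-1)*A^3*B^4*c*s^2*d*Complex.I^2 + (2)*A^3*B^4*c*s^2*W*e*Complex.I^2 + (1)*A^4*B^2*c^2 + (-1)*A^4*B^3*c^2*s*d*Complex.I + (2)*A^4*B^3*c^2*s*W*e*Complex.I + (-2)*A^4*B^6*s^2*e^2*Complex.I^2 + (-2)*A^4*B^7*s^3*d*e^2*Complex.I^3 + (1)*A^5*B^2*c^3*d + (-2)*A^5*B^2*c^3*W*e + (4)*A^5*B^5*c*s*e^2*Complex.I + (2)*A^5*B^6*c*s^2*d*e^2*Complex.I^2 + (-2)*A^6*B^4*c^2*e^2 + (2)*A^6*B^5*c^2*s*d*e^2*Complex.I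 + (-2)*A^7*B^4*c^3*d*e^2) * hd + ((1)*A^2*B^4*s^2*Complex.I^2 + (2)*A^2*B^4*s^2*W*Complex.I^2 + (-1)*A^2*B^5*s^3*e*Complex.I^3 + (2)*A^3*B^3*c*s*Complex.I + (-1)*A^3*B^4*c*s^2*e*Complex.I^2 + (1)*A^4*B^2*c^2 + (-2)*A^4*B^2*c^2*W + (1)*A^4*B^3*c^2*s*e*Complex.I + (-2)*A^4*B^4 + (2)*A^4*B^5*s*e*Complex.I + (1)*A^5*B^2*c^3*e + (-2)*A^5*B^4*c*e) * he + ((2)*B^2*c^2 + (-2)*B^2*c^2*W^2 + (-2)*B^4 + (-2)*B^4*W + (2)*B^4*s^2*Complex.I^2 + (2)*B^4*s^2*W*Complex.I^2 + (2)*A^2*B^2*c^2 + (-2)*A^2*B^2*c^2*W + (-2)*A^2*B^4) * ha + ((-2) + (-2)*W + (2)*W^2 + (2)*W^3 + (2)*s^2*Complex.I^2 + (2)*s^2*W*Complex.I^2 + (-2)*s^2*W^2*Complex.I^2 + (-2)*s^2*W^3*Complex.I^2 + (2)*c^2 + (2)*c^2*W + (-2)*c^2*W^2 + (-2)*c^2*W^3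 + (-2)*B^2 + (-4)*B^2*W + (-2)*B^2*W^2 + (2)*B^2*s^2*Complex.I^2 + (4)*B^2*s^2*W*Complex.I^2 + (2)*B^2*s^2*W^2*Complex.I^2) * hb + ((2) + (-4)*W^2 + (2)*W^4) * hcs + ((2)*s^2 + (-4)*s^2*W^2 + (2)*s^2*W^4) * Complex.I_sq

lemma mtm_final_core (u ub usq u1 ub1 u2 fx gx f1 f2 X W w : ℂ)
    (hw : W * w = 1)
    (hC : u ^ 2 + ub ^ 2 = 2 * W * (u * ub) + 2 * (u * ub) ^ 2)
    (husq : usq ^ 2 = u * ub)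
    (hu1 : u1 = -Complex.I * (W * u - ub + 2 * u ^ 2 * ub))
    (hub1 : ub1 = Complex.I * (W * ub - u + 2 * u * ub ^ 2))
    (hu2 : u2 = -Complex.I * (W * u1 - ub1 + 2 * (2 * u * ub * u1 + u ^ 2 * ub1)))
    (hfx : fx = (-(X / 2) - Complex.I / 4 * w) * u)
    (hgx : gx = (X / 2 - Complex.I / 4 * w) * ub)
    (hf1 : f1 = -(1 / 2) * u + (-(X / 2) - Complex.I / 4 * w) * u1)
    (hf2 : f2 = -u1 + (-(X / 2) - Complex.I / 4 * w) * u2) :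
    -f2 - 2 * Complex.I * usq ^ 2 * f1
      + (-2 * usq ^ 4 - u ^ 2 + ub ^ 2 - 2 * W * usq ^ 2 + 1 - W ^ 2) * fx
      + 2 * W * u ^ 2 * gx = u1 := by
  have h4 : usq ^ 4 = (usq ^ 2) ^ 2 := by ring
  subst hf2 hf1 hfx hgx hu2 hub1 hu1
  rw [h4, husq]
  linear_combination ((-1/4)*u*w*Complex.I + (-1/2)*u*X) * hC + ((-1)*u^2*ub*Complex.I) * hw + ((-1/4)*u*w*Complex.I + (1/4)*u*W^2*w*Complex.I + (-1/2)*u*X + (1/2)*u*X*W^2 + (1/2)*u^2*ub*W*w*Complex.I + (1)*u^2*ub*X*W + (1/2)*u^3*w*Complex.I + (1)*u^3*X) * Complex.I_sq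

theorem stmt14 (ω : ℝ) (hω₁ : -1 < ω) (hω₂ : ω < 1) (hω₀ : ω ≠ 0)
    (f g : ℝ → ℂ)
    (hf : ∀ x : ℝ, f x = -((x : ℂ) / 2) * solitonU ω x
        - (Complex.I / (4 * (ω : ℂ))) * solitonU ω x)
    (hg : ∀ x : ℝ, g x = ((x : ℂ) / 2) * (starRingEnd ℂ) (solitonU ω x)
        - (Complex.I / (4 * (ω : ℂ))) * (starRingEnd ℂ) (solitonU ω x)) :
    ∀ x : ℝ,
      -deriv (deriv f) x
          - 2 * Complex.I * ((‖solitonU ω x‖ : ℝ) : ℂ) ^ 2 * deriv f x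
          + (-2 * ((‖solitonU ω x‖ : ℝ) : ℂ) ^ 4 - (solitonU ω x) ^ 2
              + ((starRingEnd ℂ) (solitonU ω x)) ^ 2
              - 2 * (ω : ℂ) * ((‖solitonU ω x‖ : ℝ) : ℂ) ^ 2
              + 1 - (ω : ℂ) ^ 2) * f x
          + 2 * (ω : ℂ) * (solitonU ω x) ^ 2 * g x
        = deriv (solitonU ω) x := by
  intro x
  have h1ω : (0:ℝ) < 1 + ω := by linarith
  have h2ω : (0:ℝ) < 1 - ω := by linarith
  set a := Real.sqrt (1 + ω) with ha_def
  set b := Real.sqrt (1 - ω) with hb_def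
  have ha0 : 0 < a := Real.sqrt_pos.2 h1ω
  have ha2 : ((a:ℝ):ℂ) ^ 2 = 1 + (ω:ℂ) := by
    have h := Real.sq_sqrt h1ω.le
    rw [← ha_def] at h
    exact_mod_cast h
  have hb2 : ((b:ℝ):ℂ) ^ 2 = 1 - (ω:ℂ) := by
    have h := Real.sq_sqrt h2ω.le
    rw [← hb_def] at h
    exact_mod_cast h
  have hk : Real.sqrt (1 - ω ^ 2) = a * b := by
    rw [show (1:ℝ) - ω ^ 2 = (1 + ω) * (1 - ω) by ring, Real.sqrt_mul h1ω.le, ha_def, hb_def]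
  have hcsC : ∀ t : ℝ, ((Real.cosh (a*b*t) : ℝ) : ℂ) ^ 2 - ((Real.sinh (a*b*t) : ℝ) : ℂ) ^ 2 = 1 := by
    intro t
    exact_mod_cast Real.cosh_sq_sub_sinh_sq (a*b*t)
  have hDne : ∀ t : ℝ, mtmD a b t ≠ 0 := by
    intro t h
    have hre : (mtmD a b t).re = a * Real.cosh (a*b*t) := by
      simp only [mtmD, Complex.add_re, Complex.mul_re, Complex.mul_im, Complex.I_re,
        Complex.I_im, Complex.ofReal_re, Complex.ofReal_im]
      ring
    rw [h, Complex.zero_re] at hre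
    exact absurd hre.symm (ne_of_gt (mul_pos ha0 (Real.cosh_pos _)))
  have hDbne : ∀ t : ℝ, mtmDb a b t ≠ 0 := by
    intro t h
    have hre : (mtmDb a b t).re = a * Real.cosh (a*b*t) := by
      simp only [mtmDb, Complex.sub_re, Complex.mul_re, Complex.mul_im, Complex.I_re,
        Complex.I_im, Complex.ofReal_re, Complex.ofReal_im]
      ring
    rw [h, Complex.zero_re] at hre
    exact absurd hre.symm (ne_of_gt (mul_pos ha0 (Real.cosh_pos _)))
  have hUeq : ∀ t : ℝ, solitonU ω t = (a:ℂ) * (b:ℂ) / mtmD a b t := by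
    intro t
    simp only [solitonU, mtmD]
    rw [hk, ← ha_def, ← hb_def]
    push_cast
    ring
  have hUeqInv : ∀ t : ℝ, solitonU ω t = (a:ℂ) * (b:ℂ) * (mtmD a b t)⁻¹ := by
    intro t
    rw [hUeq t, div_eq_mul_inv]
  have hconjD : ∀ t : ℝ, (starRingEnd ℂ) (mtmD a b t) = mtmDb a b t := by
    intro t
    simp only [mtmD, mtmDb, map_add, map_mul, Complex.conj_I, Complex.conj_ofReal]
    ring
  have hconjU : ∀ t : ℝ, (starRingEnd ℂ) (solitonU ω t) = (a:ℂ) * (b:ℂ) * (mtmDb a b t)⁻¹ := by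
    intro t
    rw [hUeqInv t, map_mul, map_mul, map_inv₀, hconjD, Complex.conj_ofReal, Complex.conj_ofReal]
  -- derivative of the denominator
  have hlin : ∀ t : ℝ, HasDerivAt (fun y : ℝ => a * b * y) (a * b) t := by
    intro t
    simpa using (hasDerivAt_id t).const_mul (a * b)
  have hcoshD : ∀ t : ℝ, HasDerivAt (fun y : ℝ => Real.cosh (a*b*y)) (a * b * Real.sinh (a*b*t)) t := by
    intro t
    have h2 : HasDerivAt (fun y : ℝ => Real.cosh (a*b*y)) (Real.sinh (a*b*t) * (a*b)) t :=
      (Real.hasDerivAt_cosh (a*b*t)).comp t (hlin t)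
    rw [show Real.sinh (a*b*t) * (a*b) = a * b * Real.sinh (a*b*t) by ring] at h2
    exact h2
  have hsinhD : ∀ t : ℝ, HasDerivAt (fun y : ℝ => Real.sinh (a*b*y)) (a * b * Real.cosh (a*b*t)) t := by
    intro t
    have h2 : HasDerivAt (fun y : ℝ => Real.sinh (a*b*y)) (Real.cosh (a*b*t) * (a*b)) t :=
      (Real.hasDerivAt_sinh (a*b*t)).comp t (hlin t)
    rw [show Real.cosh (a*b*t) * (a*b) = a * b * Real.cosh (a*b*t) by ring] at h2
    exact h2
  have hU1 : ∀ t : ℝ, HasDerivAt (solitonU ω)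
      (-(((a:ℂ) * (b:ℂ)) ^ 2 * mtmE a b t) * ((mtmD a b t)⁻¹) ^ 2) t := by
    intro t
    have h1 := ((hcoshD t).ofReal_comp).const_mul ((a:ℝ):ℂ)
    have h2 := (((hsinhD t).ofReal_comp).const_mul ((b:ℝ):ℂ)).const_mul Complex.I
    have h3 : HasDerivAt (fun y : ℝ => mtmD a b y)
        ((a:ℂ) * ((a * b * Real.sinh (a*b*t) : ℝ) : ℂ)
          + Complex.I * ((b:ℂ) * ((a * b * Real.cosh (a*b*t) : ℝ) : ℂ))) t := h1.add h2
    have h4 : HasDerivAt (fun y : ℝ => (a:ℂ) * (b:ℂ) / mtmD a b y)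
        ((0 * mtmD a b t - ((a:ℂ) * (b:ℂ)) * ((a:ℂ) * ((a * b * Real.sinh (a*b*t) : ℝ) : ℂ)
          + Complex.I * ((b:ℂ) * ((a * b * Real.cosh (a*b*t) : ℝ) : ℂ)))) / mtmD a b t ^ 2) t :=
      (hasDerivAt_const t ((a:ℂ) * (b:ℂ))).div h3 (hDne t)
    have hval : (0 * mtmD a b t - ((a:ℂ) * (b:ℂ)) * ((a:ℂ) * ((a * b * Real.sinh (a*b*t) : ℝ) : ℂ)
          + Complex.I * ((b:ℂ) * ((a * b * Real.cosh (a*b*t) : ℝ) : ℂ)))) / mtmD a b t ^ 2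
        = -(((a:ℂ) * (b:ℂ)) ^ 2 * mtmE a b t) * ((mtmD a b t)⁻¹) ^ 2 := by
      simp only [mtmE]
      push_cast
      ring
    rw [hval] at h4
    have hfun : (fun y : ℝ => (a:ℂ) * (b:ℂ) / mtmD a b y) = solitonU ω :=
      funext fun y => (hUeq y).symm
    rw [hfun] at h4
    exact h4
  have hODE : ∀ t : ℝ, -(((a:ℂ) * (b:ℂ)) ^ 2 * mtmE a b t) * ((mtmD a b t)⁻¹) ^ 2 = mtmV ω t := by
    intro t
    exact mtm_ode_core ((a:ℝ):ℂ) ((b:ℝ):ℂ) ((Real.cosh (a*b*t) : ℝ) : ℂ)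
      ((Real.sinh (a*b*t) : ℝ) : ℂ) ((ω:ℝ):ℂ) (solitonU ω t)
      ((starRingEnd ℂ) (solitonU ω t))
      (-(((a:ℂ) * (b:ℂ)) ^ 2 * mtmE a b t) * ((mtmD a b t)⁻¹) ^ 2)
      ((mtmD a b t)⁻¹) ((mtmDb a b t)⁻¹)
      ha2 hb2 (hcsC t) (mul_inv_cancel₀ (hDne t)) (mul_inv_cancel₀ (hDbne t))
      (hUeqInv t) (hconjU t) rfl
  have hVd : ∀ t : ℝ, HasDerivAt (solitonU ω) (mtmV ω t) t := by
    intro t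
    have h := hU1 t
    rwa [hODE t] at h
  have hcj : ∀ t : ℝ, HasDerivAt (fun y : ℝ => (starRingEnd ℂ) (solitonU ω y))
      ((starRingEnd ℂ) (mtmV ω t)) t := by
    intro t
    simpa [Complex.star_def] using (hVd t).star
  have hV2 : ∀ t : ℝ, HasDerivAt (fun y : ℝ => mtmV ω y)
      (-Complex.I * ((ω:ℂ) * mtmV ω t - (starRingEnd ℂ) (mtmV ω t)
        + (2 * (mtmV ω t * solitonU ω t + solitonU ω t * mtmV ω t) * (starRingEnd ℂ) (solitonU ω t)
          + 2 * (solitonU ω t * solitonU ω t) * (starRingEnd ℂ) (mtmV ω t)))) t := by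
    intro t
    exact ((((hVd t).const_mul ((ω:ℝ):ℂ)).sub (hcj t)).add
      ((((hVd t).mul (hVd t)).const_mul (2:ℂ)).mul (hcj t))).const_mul (-Complex.I)
  have hV2' : ∀ t : ℝ, HasDerivAt (fun y : ℝ => mtmV ω y) (deriv (fun y : ℝ => mtmV ω y) t) t := by
    intro t
    exact (hV2 t).differentiableAt.hasDerivAt
  have hωC : ((ω:ℝ):ℂ) ≠ 0 := Complex.ofReal_ne_zero.2 hω₀
  -- p(t) and f
  have hp : ∀ t : ℝ, HasDerivAt (fun y : ℝ => (-((y:ℂ) / 2) - Complex.I / (4 * (ω:ℂ))))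
      (-(1/2) : ℂ) t := by
    intro t
    have h0 : HasDerivAt (fun y : ℝ => (y:ℂ)) 1 t := by
      simpa using (hasDerivAt_id t).ofReal_comp
    exact ((h0.div_const 2).neg).sub_const (Complex.I / (4 * (ω:ℂ)))
  have hfeq : f = fun t : ℝ => (-((t:ℂ) / 2) - Complex.I / (4 * (ω:ℂ))) * solitonU ω t :=
    funext fun t => by rw [hf t]; ring
  have hF1 : ∀ t : ℝ, HasDerivAt f
      (-(1/2) * solitonU ω t + (-((t:ℂ) / 2) - Complex.I / (4 * (ω:ℂ))) * mtmV ω t) t := by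
    intro t
    rw [hfeq]
    exact (hp t).mul (hVd t)
  have hdf_eq : deriv f = fun t : ℝ =>
      -(1/2) * solitonU ω t + (-((t:ℂ) / 2) - Complex.I / (4 * (ω:ℂ))) * mtmV ω t :=
    funext fun t => (hF1 t).deriv
  have hF2 : HasDerivAt (fun t : ℝ =>
      -(1/2) * solitonU ω t + (-((t:ℂ) / 2) - Complex.I / (4 * (ω:ℂ))) * mtmV ω t)
      (-(1/2) * mtmV ω x + (-(1/2) * mtmV ω x
        + (-((x:ℂ) / 2) - Complex.I / (4 * (ω:ℂ))) * deriv (fun y : ℝ => mtmV ω y) x)) x :=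
    ((hVd x).const_mul (-(1/2) : ℂ)).add ((hp x).mul (hV2' x))
  have hddf_eq : deriv (deriv f) x
      = -(1/2) * mtmV ω x + (-(1/2) * mtmV ω x
        + (-((x:ℂ) / 2) - Complex.I / (4 * (ω:ℂ))) * deriv (fun y : ℝ => mtmV ω y) x) := by
    rw [hdf_eq]
    exact hF2.deriv
  have hIw : Complex.I / 4 * ((ω:ℂ))⁻¹ = Complex.I / (4 * (ω:ℂ)) := by
    rw [← div_eq_mul_inv, div_div]
  -- assemble
  refine mtm_final_core (solitonU ω x) ((starRingEnd ℂ) (solitonU ω x))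
    ((‖solitonU ω x‖ : ℝ) : ℂ) (deriv (solitonU ω) x)
    ((starRingEnd ℂ) (mtmV ω x)) (deriv (fun y : ℝ => mtmV ω y) x)
    (f x) (g x) (deriv f x) (deriv (deriv f) x) ((x:ℝ):ℂ) ((ω:ℝ):ℂ) ((ω:ℂ))⁻¹
    (mul_inv_cancel₀ hωC) ?_ ?_ ?_ ?_ ?_ ?_ ?_ ?_ ?_
  · exact mtm_cons_core ((a:ℝ):ℂ) ((b:ℝ):ℂ) ((Real.cosh (a*b*x) : ℝ) : ℂ)
      ((Real.sinh (a*b*x) : ℝ) : ℂ) ((ω:ℝ):ℂ) (solitonU ω x)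
      ((starRingEnd ℂ) (solitonU ω x)) ((mtmD a b x)⁻¹) ((mtmDb a b x)⁻¹)
      ha2 hb2 (hcsC x) (mul_inv_cancel₀ (hDne x)) (mul_inv_cancel₀ (hDbne x))
      (hUeqInv x) (hconjU x)
  · rw [Complex.mul_conj]
    norm_cast
    exact Complex.sq_norm _
  · rw [(hVd x).deriv]
    simp only [mtmV]
    ring
  · simp only [mtmV, map_mul, map_add, map_sub, map_neg, map_pow, map_ofNat,
      Complex.conj_I, Complex.conj_conj, Complex.conj_ofReal]
    ring
  · rw [(hV2 x).deriv, (hVd x).deriv]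
    ring
  · rw [hf x]
    field_simp
  · rw [hg x]
    field_simp
  · rw [(hF1 x).deriv, (hVd x).deriv, hIw]
  · rw [hddf_eq, (hVd x).deriv, hIw]
    ring
end
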